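/- Let d ≥ 1 and let S ⊆ ℝ^d be a finite set shattered by the collection of closed axis-parallel cubes (Cartesian products of d closed intervals all of the same length, including degenerate singletons). Then |S| ≤ ⌊(3d+1)/2⌋. -/

import Mathlib

/-- A collection `C` of subsets of `Ω` shatters a finite set `S` if every subset of `S`
is carved out by some member of `C`. -/
def Shatters {Ω : Type*} (C : Set (Set Ω)) (S : Finset Ω) : Prop :=
  ∀ A ⊆ S, ∃ c ∈ C, (S : Set Ω) ∩ c = (A : Set Ω)

/-- The collection of closed axis-parallel cubes in `ℝ^d`: products of `d` closed intervals
all of the same (nonnegative) length. -/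
def ClosedCubes (d : ℕ) : Set (Set (Fin d → ℝ)) :=
  {C | ∃ (a : Fin d → ℝ) (r : ℝ), 0 ≤ r ∧
    C = Set.univ.pi fun i => Set.Icc (a i) (a i + r)}

namespace CubeVC

variable {d : ℕ}

/-- `x` is the strict maximum of `S` in coordinate `j`. -/
abbrev OwnT (S : Finset (Fin d → ℝ)) (j : Fin d) (x : Fin d → ℝ) : Prop :=
  ∀ z ∈ S, z ≠ x → z j < x j

/-- `x` is the strict minimum of `S` in coordinate `j`. -/
abbrev OwnB (S : Finset (Fin d → ℝ)) (j : Fin d) (x : Fin d → ℝ) : Prop :=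
  ∀ z ∈ S, z ≠ x → x j < z j

/-- `x` owns the slot `sl` (a coordinate together with a side). -/
abbrev Own (S : Finset (Fin d → ℝ)) (sl : Fin d × Bool) (x : Fin d → ℝ) : Prop :=
  cond sl.2 (OwnT S sl.1 x) (OwnB S sl.1 x)

/-- `x` and `y` tie at slot `sl`, strictly beyond everything else. -/
abbrev Tie (S : Finset (Fin d → ℝ)) (x y : Fin d → ℝ) (sl : Fin d × Bool) : Prop :=
  x sl.1 = y sl.1 ∧
    cond sl.2 (∀ z ∈ S, z ≠ x → z ≠ y → z sl.1 < x sl.1)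
      (∀ z ∈ S, z ≠ x → z ≠ y → x sl.1 < z sl.1)

/-- One of `x`, `y` owns the slot `sl`. -/
abbrev Spare (S : Finset (Fin d → ℝ)) (x y : Fin d → ℝ) (sl : Fin d × Bool) : Prop :=
  Own S sl x ∨ Own S sl y

lemma own_unique {S : Finset (Fin d → ℝ)} {sl : Fin d × Bool} {x y : Fin d → ℝ}
    (hx : x ∈ S) (hy : y ∈ S) (h1 : Own S sl x) (h2 : Own S sl y) : x = y := by
  by_contra hne
  obtain ⟨u, s⟩ := sl
  cases s <;>
    exact absurd (h1 y hy fun h => hne h.symm) (not_lt.2 (h2 x hx hne).le)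

/-- From shattering: for any `E ⊆ S` there is a cube containing exactly `S \ E`. -/
lemma excl {S : Finset (Fin d → ℝ)} [DecidableEq (Fin d → ℝ)]
    (hS : Shatters (ClosedCubes d) S) (E : Finset (Fin d → ℝ)) (hE : E ⊆ S) :
    ∃ (a : Fin d → ℝ) (r : ℝ), 0 ≤ r ∧
      (∀ z ∈ S, z ∉ E → ∀ i, a i ≤ z i ∧ z i ≤ a i + r) ∧
      (∀ y ∈ E, ∃ i, y i < a i ∨ a i + r < y i) := by
  obtain ⟨c, hc, heq⟩ := hS (S \ E) Finset.sdiff_subset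
  obtain ⟨a, r, hr, rfl⟩ := hc
  refine ⟨a, r, hr, ?_, ?_⟩
  · intro z hz hzE i
    have hmem : z ∈ (S : Set (Fin d → ℝ)) ∩ Set.univ.pi fun i => Set.Icc (a i) (a i + r) := by
      rw [heq]
      exact Finset.mem_coe.mpr (Finset.mem_sdiff.mpr ⟨hz, hzE⟩)
    exact Set.mem_Icc.mp (Set.mem_univ_pi.mp hmem.2 i)
  · intro y hy
    have hnot : y ∉ (S : Set (Fin d → ℝ)) ∩ Set.univ.pi fun i => Set.Icc (a i) (a i + r) := by
      rw [heq]
      simp [Finset.mem_sdiff, hy]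
    have hyc : y ∉ Set.univ.pi fun i => Set.Icc (a i) (a i + r) :=
      fun h => hnot ⟨Finset.mem_coe.mpr (hE hy), h⟩
    rw [Set.mem_univ_pi] at hyc
    push_neg at hyc
    obtain ⟨i, hi⟩ := hyc
    rw [Set.mem_Icc] at hi
    rcases not_and_or.mp hi with h | h
    · exact ⟨i, Or.inl (not_le.mp h)⟩
    · exact ⟨i, Or.inr (not_le.mp h)⟩

lemma resolve_top {S : Finset (Fin d → ℝ)} {x y q : Fin d → ℝ} {u : Fin d}
    (hq : x = q ∨ y = q)
    (hbe : ∀ z ∈ S, z ≠ x → z ≠ y → z u < q u) :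
    Tie S x y (u, true) ∨ Spare S x y (u, true) := by
  obtain rfl | rfl := hq
  · rcases lt_trichotomy (y u) (x u) with h | h | h
    · refine Or.inr (Or.inl ?_)
      intro z hz hzx
      by_cases hzy : z = y
      · rw [hzy]; exact h
      · exact hbe z hz hzx hzy
    · exact Or.inl ⟨h.symm, hbe⟩
    · refine Or.inr (Or.inr ?_)
      intro z hz hzy
      by_cases hzx : z = x
      · rw [hzx]; exact h
      · exact (hbe z hz hzx hzy).trans h
  · rcases lt_trichotomy (x u) (y u) with h | h | h
    · refine Or.inr (Or.inr ?_)
      intro z hz hzy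
      by_cases hzx : z = x
      · rw [hzx]; exact h
      · exact hbe z hz hzx hzy
    · refine Or.inl ⟨h, ?_⟩
      intro z hz hzx hzy
      rw [h]; exact hbe z hz hzx hzy
    · refine Or.inr (Or.inl ?_)
      intro z hz hzx
      by_cases hzy : z = y
      · rw [hzy]; exact h
      · exact (hbe z hz hzx hzy).trans h

lemma resolve_bot {S : Finset (Fin d → ℝ)} {x y q : Fin d → ℝ} {u : Fin d}
    (hq : x = q ∨ y = q)
    (hbe : ∀ z ∈ S, z ≠ x → z ≠ y → q u < z u) :
    Tie S x y (u, false) ∨ Spare S x y (u, false) := by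
  obtain rfl | rfl := hq
  · rcases lt_trichotomy (x u) (y u) with h | h | h
    · refine Or.inr (Or.inl ?_)
      intro z hz hzx
      by_cases hzy : z = y
      · rw [hzy]; exact h
      · exact hbe z hz hzx hzy
    · exact Or.inl ⟨h, hbe⟩
    · refine Or.inr (Or.inr ?_)
      intro z hz hzy
      by_cases hzx : z = x
      · rw [hzx]; exact h
      · exact h.trans (hbe z hz hzx hzy)
  · rcases lt_trichotomy (y u) (x u) with h | h | h
    · refine Or.inr (Or.inr ?_)
      intro z hz hzy
      by_cases hzx : z = x
      · rw [hzx]; exact h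
      · exact hbe z hz hzx hzy
    · refine Or.inl ⟨h.symm, ?_⟩
      intro z hz hzx hzy
      rw [h.symm]; exact hbe z hz hzx hzy
    · refine Or.inr (Or.inl ?_)
      intro z hz hzx
      by_cases hzy : z = y
      · rw [hzy]; exact h
      · exact h.trans (hbe z hz hzx hzy)

lemma single_lemma {S : Finset (Fin d → ℝ)} [DecidableEq (Fin d → ℝ)]
    (hS : Shatters (ClosedCubes d) S) (i₀ : Fin d) (p₀ q₀ : Fin d → ℝ)
    (hp₀S : p₀ ∈ S) (hq₀S : q₀ ∈ S)
    (H1 : ∀ z ∈ S, z i₀ ≤ p₀ i₀) (H2 : ∀ z ∈ S, q₀ i₀ ≤ z i₀)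
    (x : Fin d → ℝ) (hxS : x ∈ S) (hxp : x ≠ p₀) (hxq : x ≠ q₀) :
    ∃ sl : Fin d × Bool, sl.1 ≠ i₀ ∧ Own S sl x := by
  obtain ⟨a, r, hr0, hin, hout⟩ := excl hS {x} (Finset.singleton_subset_iff.mpr hxS)
  obtain ⟨i, hxo⟩ := hout x (Finset.mem_singleton_self x)
  have hinS : ∀ z ∈ S, z ≠ x → ∀ k, a k ≤ z k ∧ z k ≤ a k + r := by
    intro z hz hne k
    exact hin z hz (by simp [hne]) k
  rcases hxo with hb | ht
  · refine ⟨(i, false), ?_, ?_⟩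
    · intro h
      have h' : i = i₀ := h
      rw [h'] at hb
      have h1 := (hinS q₀ hq₀S (fun h => hxq h.symm) i₀).1
      have h2 := H2 x hxS
      linarith
    · intro z hz hne
      exact lt_of_lt_of_le hb (hinS z hz hne i).1
  · refine ⟨(i, true), ?_, ?_⟩
    · intro h
      have h' : i = i₀ := h
      rw [h'] at ht
      have h1 := (hinS p₀ hp₀S (fun h => hxp h.symm) i₀).2
      have h2 := H1 x hxS
      linarith
    · intro z hz hne
      exact lt_of_le_of_lt (hinS z hz hne i).2 ht

lemma pair_lemma {S : Finset (Fin d → ℝ)} [DecidableEq (Fin d → ℝ)]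
    (hS : Shatters (ClosedCubes d) S) (i₀ : Fin d) (p₀ q₀ : Fin d → ℝ)
    (hp₀S : p₀ ∈ S) (hq₀S : q₀ ∈ S)
    (H1 : ∀ z ∈ S, z i₀ ≤ p₀ i₀) (H2 : ∀ z ∈ S, q₀ i₀ ≤ z i₀)
    (H3 : ∀ z ∈ S, ∀ w ∈ S, ∀ i, z i - w i ≤ p₀ i₀ - q₀ i₀)
    (x y : Fin d → ℝ) (hxS : x ∈ S) (hyS : y ∈ S)
    (hxp : x ≠ p₀) (hxq : x ≠ q₀) (hyp : y ≠ p₀) (hyq : y ≠ q₀) (hxy : x ≠ y)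
    (j : Fin d) (hjx : OwnT S j x) (hjy : OwnB S j y) :
    ∃ sl : Fin d × Bool, sl.1 ≠ i₀ ∧ sl.1 ≠ j ∧ (Tie S x y sl ∨ Spare S x y sl) := by
  have hEsub : ({x, y} : Finset (Fin d → ℝ)) ⊆ S := by
    intro z hz
    rcases Finset.mem_insert.mp hz with rfl | hz
    · exact hxS
    · rw [Finset.mem_singleton.mp hz]; exact hyS
  obtain ⟨a, r, hr0, hin, hout⟩ := excl hS {x, y} hEsub
  have hpE : p₀ ∉ ({x, y} : Finset (Fin d → ℝ)) := by
    simp only [Finset.mem_insert, Finset.mem_singleton]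
    push_neg
    exact ⟨fun h => hxp h.symm, fun h => hyp h.symm⟩
  have hqE : q₀ ∉ ({x, y} : Finset (Fin d → ℝ)) := by
    simp only [Finset.mem_insert, Finset.mem_singleton]
    push_neg
    exact ⟨fun h => hxq h.symm, fun h => hyq h.symm⟩
  have hp_in := hin p₀ hp₀S hpE
  have hq_in := hin q₀ hq₀S hqE
  have hrW : p₀ i₀ - q₀ i₀ ≤ r := by
    have h1 := (hp_in i₀).2
    have h2 := (hq_in i₀).1
    linarith
  have hinS : ∀ z ∈ S, z ≠ x → z ≠ y → ∀ i, a i ≤ z i ∧ z i ≤ a i + r := by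
    intro z hz h1 h2 i
    exact hin z hz (by simp [h1, h2]) i
  obtain ⟨ix, hxout⟩ := hout x (Finset.mem_insert_self x {y})
  obtain ⟨iy, hyout⟩ := hout y (by simp)
  have ne_top : ∀ q : Fin d → ℝ, q ∈ S →
      ∀ u : Fin d, (∀ z ∈ S, z ≠ x → z ≠ y → z u < q u) → u ≠ i₀ := by
    intro q hqS u hbe h
    have h1 := hbe p₀ hp₀S (fun h => hxp h.symm) (fun h => hyp h.symm)
    rw [h] at h1
    have h2 := H1 q hqS
    linarith
  have ne_bot : ∀ q : Fin d → ℝ, q ∈ S →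
      ∀ u : Fin d, (∀ z ∈ S, z ≠ x → z ≠ y → q u < z u) → u ≠ i₀ := by
    intro q hqS u hbe h
    have h1 := hbe q₀ hq₀S (fun h => hxq h.symm) (fun h => hyq h.symm)
    rw [h] at h1
    have h2 := H2 q hqS
    linarith
  by_cases hc : ix = iy
  · rw [hc] at hxout
    rcases hxout with hxb | hxt <;> rcases hyout with hyb | hyt
    · -- both excluded below at iy
      have hbx : ∀ z ∈ S, z ≠ x → z ≠ y → x iy < z iy :=
        fun z hz h1 h2 => lt_of_lt_of_le hxb (hinS z hz h1 h2 iy).1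
      have hnej : iy ≠ j := by
        intro h
        have h1 := hjx p₀ hp₀S (fun h => hxp h.symm)
        have h2 := hbx p₀ hp₀S (fun h => hxp h.symm) (fun h => hyp h.symm)
        rw [h] at h2
        linarith
      exact ⟨(iy, false), ne_bot x hxS iy hbx, hnej, resolve_bot (Or.inl rfl) hbx⟩
    · -- x below, y above : contradicts r ≥ W
      exfalso
      have h3 := H3 y hyS x hxS iy
      linarith
    · -- x above, y below : contradicts r ≥ W
      exfalso
      have h3 := H3 x hxS y hyS iy
      linarith
    · -- both excluded above at iy
      have hbx : ∀ z ∈ S, z ≠ x → z ≠ y → z iy < x iy :=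
        fun z hz h1 h2 => lt_of_le_of_lt (hinS z hz h1 h2 iy).2 hxt
      have hby : ∀ z ∈ S, z ≠ x → z ≠ y → z iy < y iy :=
        fun z hz h1 h2 => lt_of_le_of_lt (hinS z hz h1 h2 iy).2 hyt
      have hnej : iy ≠ j := by
        intro h
        have h1 := hjy p₀ hp₀S (fun h => hyp h.symm)
        have h2 := hby p₀ hp₀S (fun h => hxp h.symm) (fun h => hyp h.symm)
        rw [h] at h2
        linarith
      exact ⟨(iy, true), ne_top x hxS iy hbx, hnej, resolve_top (Or.inl rfl) hbx⟩
  · by_cases hxj : ix = j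
    · have hyj : iy ≠ j := fun h => hc (hxj.trans h.symm)
      rcases hyout with hyb | hyt
      · have hby : ∀ z ∈ S, z ≠ x → z ≠ y → y iy < z iy :=
          fun z hz h1 h2 => lt_of_lt_of_le hyb (hinS z hz h1 h2 iy).1
        exact ⟨(iy, false), ne_bot y hyS iy hby, hyj, resolve_bot (Or.inr rfl) hby⟩
      · have hby : ∀ z ∈ S, z ≠ x → z ≠ y → z iy < y iy :=
          fun z hz h1 h2 => lt_of_le_of_lt (hinS z hz h1 h2 iy).2 hyt
        exact ⟨(iy, true), ne_top y hyS iy hby, hyj, resolve_top (Or.inr rfl) hby⟩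
    · rcases hxout with hxb | hxt
      · have hbx : ∀ z ∈ S, z ≠ x → z ≠ y → x ix < z ix :=
          fun z hz h1 h2 => lt_of_lt_of_le hxb (hinS z hz h1 h2 ix).1
        exact ⟨(ix, false), ne_bot x hxS ix hbx, hxj, resolve_bot (Or.inl rfl) hbx⟩
      · have hbx : ∀ z ∈ S, z ≠ x → z ≠ y → z ix < x ix :=
          fun z hz h1 h2 => lt_of_le_of_lt (hinS z hz h1 h2 ix).2 hxt
        exact ⟨(ix, true), ne_top x hxS ix hbx, hxj, resolve_top (Or.inl rfl) hbx⟩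

end CubeVC

open CubeVC

/-- If a finite set `S ⊆ ℝ^d` (`d ≥ 1`) is shattered by closed cubes then
`|S| ≤ ⌊(3d+1)/2⌋`. -/
theorem card_le_of_shattered_by_cubes (d : ℕ) (hd : 1 ≤ d) (S : Finset (Fin d → ℝ))
    (hS : Shatters (ClosedCubes d) S) : S.card ≤ (3 * d + 1) / 2 := by
  classical
  by_cases h2 : S.card ≤ 1
  · omega
  push_neg at h2
  have hne : S.Nonempty := Finset.card_pos.mp (by omega)
  obtain ⟨i₀, -, hi₀⟩ := Finset.exists_max_image (Finset.univ : Finset (Fin d))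
    (fun i => S.sup' hne (fun p => p i) - S.inf' hne (fun p => p i))
    ⟨⟨0, hd⟩, Finset.mem_univ _⟩
  obtain ⟨p₀, hp₀S, hp₀⟩ := Finset.exists_mem_eq_sup' hne (fun p => p i₀)
  obtain ⟨q₀, hq₀S, hq₀⟩ := Finset.exists_mem_eq_inf' hne (fun p => p i₀)
  have H1 : ∀ z ∈ S, z i₀ ≤ p₀ i₀ := by
    intro z hz
    have h := Finset.le_sup' (fun p : Fin d → ℝ => p i₀) hz
    rw [hp₀] at h
    exact h
  have H2 : ∀ z ∈ S, q₀ i₀ ≤ z i₀ := by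
    intro z hz
    have h := Finset.inf'_le (fun p : Fin d → ℝ => p i₀) hz
    rw [hq₀] at h
    exact h
  have H3 : ∀ z ∈ S, ∀ w ∈ S, ∀ i, z i - w i ≤ p₀ i₀ - q₀ i₀ := by
    intro z hz w hw i
    have h1 := Finset.le_sup' (fun p : Fin d → ℝ => p i) hz
    have h2 := Finset.inf'_le (fun p : Fin d → ℝ => p i) hw
    have h3 := hi₀ i (Finset.mem_univ i)
    rw [hp₀, hq₀] at h3
    linarith
  by_cases hpq : p₀ = q₀
  · exfalso
    obtain ⟨x, hx, y, hy, hxy⟩ := Finset.one_lt_card.mp h2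
    apply hxy
    funext i
    have a1 := H3 x hx y hy i
    have a2 := H3 y hy x hx i
    rw [hpq, sub_self] at a1 a2
    linarith
  -- the main case
  set S' : Finset (Fin d → ℝ) := (S.erase p₀).erase q₀ with hS'def
  have hq₀ep : q₀ ∈ S.erase p₀ := Finset.mem_erase.mpr ⟨fun h => hpq h.symm, hq₀S⟩
  have hcard' : S'.card + 2 = S.card := by
    have e1 := Finset.card_erase_of_mem hq₀ep
    have e2 := Finset.card_erase_of_mem hp₀S
    rw [hS'def, e1, e2]
    omega
  have hmem' : ∀ x ∈ S', x ∈ S ∧ x ≠ p₀ ∧ x ≠ q₀ := by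
    intro x hx
    rw [hS'def, Finset.mem_erase, Finset.mem_erase] at hx
    exact ⟨hx.2.2, hx.2.1, hx.1⟩
  -- the injective slot assignment π
  have hπex : ∀ x : {x // x ∈ S'}, ∃ sl : Fin d × Bool, sl.1 ≠ i₀ ∧ Own S sl x.1 :=
    fun x => single_lemma hS i₀ p₀ q₀ hp₀S hq₀S H1 H2 x.1
      (hmem' _ x.2).1 (hmem' _ x.2).2.1 (hmem' _ x.2).2.2
  set π : {x // x ∈ S'} → Fin d × Bool := fun x => Classical.choose (hπex x) with hπdef
  have hπ1 : ∀ x, (π x).1 ≠ i₀ := fun x => (Classical.choose_spec (hπex x)).1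
  have hπ2 : ∀ x, Own S (π x) x.1 := fun x => (Classical.choose_spec (hπex x)).2
  have hπinj : Function.Injective π := by
    intro a b h
    exact Subtype.ext (own_unique (hmem' _ a.2).1 (hmem' _ b.2).1 (hπ2 a) (h ▸ hπ2 b))
  set I : Finset (Fin d × Bool) := S'.attach.image π with hIdef
  have hIcard : I.card = S'.card := by
    rw [hIdef, Finset.card_image_of_injective _ hπinj, Finset.card_attach]
  have hImem : ∀ sl ∈ I, ∃ x : {x // x ∈ S'}, π x = sl := by
    intro sl hsl
    obtain ⟨x, -, hx⟩ := Finset.mem_image.mp hsl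
    exact ⟨x, hx⟩
  have hIi₀ : ∀ sl ∈ I, sl.1 ≠ i₀ := by
    intro sl hsl
    obtain ⟨x, rfl⟩ := hImem sl hsl
    exact hπ1 x
  set Dbl : Finset (Fin d) :=
    Finset.univ.filter (fun j => (j, true) ∈ I ∧ (j, false) ∈ I) with hDdef
  set J : Finset (Fin d) := Finset.univ.erase i₀ with hJdef
  have hJcard : J.card = d - 1 := by
    rw [hJdef, Finset.card_erase_of_mem (Finset.mem_univ i₀), Finset.card_univ,
      Fintype.card_fin]
  -- Inequality 1 : |I| ≤ |J| + |Dbl|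
  have ineq1 : I.card ≤ J.card + Dbl.card := by
    have hmaps : ∀ sl ∈ I,
        (if sl.2 = false ∧ (sl.1, true) ∈ I then Sum.inr sl.1 else Sum.inl sl.1)
          ∈ J.disjSum Dbl := by
      intro sl hsl
      by_cases h : sl.2 = false ∧ (sl.1, true) ∈ I
      · rw [if_pos h]
        refine Finset.inr_mem_disjSum.mpr ?_
        rw [hDdef, Finset.mem_filter]
        refine ⟨Finset.mem_univ _, h.2, ?_⟩
        have he : sl = (sl.1, false) := Prod.ext rfl h.1
        rw [← he]; exact hsl
      · rw [if_neg h]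
        exact Finset.inl_mem_disjSum.mpr
          (Finset.mem_erase.mpr ⟨hIi₀ sl hsl, Finset.mem_univ _⟩)
    have hinj : Set.InjOn
        (fun sl : Fin d × Bool =>
          if sl.2 = false ∧ (sl.1, true) ∈ I then Sum.inr sl.1 else Sum.inl sl.1) I := by
      intro sl hsl sl' hsl' h
      have h' : (if sl.2 = false ∧ (sl.1, true) ∈ I then Sum.inr sl.1 else Sum.inl sl.1)
          = (if sl'.2 = false ∧ (sl'.1, true) ∈ I then Sum.inr sl'.1 else Sum.inl sl'.1) := h
      clear h
      by_cases h1 : sl.2 = false ∧ (sl.1, true) ∈ I <;>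
        by_cases h2 : sl'.2 = false ∧ (sl'.1, true) ∈ I
      · rw [if_pos h1, if_pos h2] at h'
        exact Prod.ext (Sum.inr.inj h') (h1.1.trans h2.1.symm)
      · rw [if_pos h1, if_neg h2] at h'
        exact nomatch h'
      · rw [if_neg h1, if_pos h2] at h'
        exact nomatch h'
      · rw [if_neg h1, if_neg h2] at h'
        have hcc : sl.1 = sl'.1 := Sum.inl.inj h'
        have hb : sl.2 = sl'.2 := by
          cases hs : sl.2 <;> cases hs' : sl'.2
          · rfl
          · exfalso
            apply h1
            refine ⟨hs, ?_⟩
            have he : sl' = (sl.1, true) := Prod.ext hcc.symm hs'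
            rw [← he]; exact hsl'
          · exfalso
            apply h2
            refine ⟨hs', ?_⟩
            have he : sl = (sl'.1, true) := Prod.ext hcc hs
            rw [← he]; exact hsl
          · rfl
        exact Prod.ext hcc hb
    have hle := Finset.card_le_card_of_injOn
      (fun sl : Fin d × Bool =>
        if sl.2 = false ∧ (sl.1, true) ∈ I then Sum.inr sl.1 else Sum.inl sl.1)
      hmaps hinj
    rwa [Finset.card_disjSum] at hle
  -- construction of θ
  have hθex : ∀ j ∈ Dbl, ∃ (sl : Fin d × Bool) (x y : Fin d → ℝ)
      (hx : x ∈ S') (hy : y ∈ S'),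
      π ⟨x, hx⟩ = (j, true) ∧ π ⟨y, hy⟩ = (j, false) ∧ sl ∉ I ∧ sl.1 ≠ i₀ ∧
      (Tie S x y sl ∨ Spare S x y sl) := by
    intro j hj
    rw [hDdef, Finset.mem_filter] at hj
    obtain ⟨-, hjt, hjf⟩ := hj
    obtain ⟨⟨x, hx⟩, hπx⟩ := hImem _ hjt
    obtain ⟨⟨y, hy⟩, hπy⟩ := hImem _ hjf
    have hxm := hmem' x hx
    have hym := hmem' y hy
    have hxOwn : OwnT S j x := by
      have h := hπ2 ⟨x, hx⟩
      rw [hπx] at h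
      exact h
    have hyOwn : OwnB S j y := by
      have h := hπ2 ⟨y, hy⟩
      rw [hπy] at h
      exact h
    have hxy : x ≠ y := by
      rintro rfl
      have h1 := hxOwn p₀ hp₀S (fun h => hxm.2.1 h.symm)
      have h2 := hyOwn p₀ hp₀S (fun h => hxm.2.1 h.symm)
      linarith
    obtain ⟨sl, hsl₀, hslj, hTS⟩ := pair_lemma hS i₀ p₀ q₀ hp₀S hq₀S H1 H2 H3 x y
      hxm.1 hym.1 hxm.2.1 hxm.2.2 hym.2.1 hym.2.2 hxy j hxOwn hyOwn
    refine ⟨sl, x, y, hx, hy, hπx, hπy, ?_, hsl₀, hTS⟩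
    intro hslI
    obtain ⟨⟨w, hw⟩, hπw⟩ := hImem sl hslI
    have hwOwn : Own S sl w := by
      have h := hπ2 ⟨w, hw⟩
      rw [hπw] at h
      exact h
    have hwS := (hmem' w hw).1
    rcases hTS with ⟨hteq, htbe⟩ | hsp
    · by_cases hwx : w = x
      · apply hslj
        have e : sl = (j, true) := by
          rw [← hπw, ← hπx]
          exact congrArg π (Subtype.ext hwx)
        exact congrArg Prod.fst e
      · by_cases hwy : w = y
        · apply hslj
          have e : sl = (j, false) := by
            rw [← hπw, ← hπy]
            exact congrArg π (Subtype.ext hwy)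
          exact congrArg Prod.fst e
        · obtain ⟨u, s⟩ := sl
          cases s
          · have h1 := hwOwn x hxm.1 (fun h => hwx h.symm)
            have h2 := htbe w hwS hwx hwy
            linarith
          · have h1 := hwOwn x hxm.1 (fun h => hwx h.symm)
            have h2 := htbe w hwS hwx hwy
            linarith
    · rcases hsp with hq | hq
      · have hwx : w = x := own_unique hwS hxm.1 hwOwn hq
        apply hslj
        have e : sl = (j, true) := by
          rw [← hπw, ← hπx]
          exact congrArg π (Subtype.ext hwx)
        exact congrArg Prod.fst e
      · have hwy : w = y := own_unique hwS hym.1 hwOwn hq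
        apply hslj
        have e : sl = (j, false) := by
          rw [← hπw, ← hπy]
          exact congrArg π (Subtype.ext hwy)
        exact congrArg Prod.fst e
  set θ : Fin d → Fin d × Bool :=
    fun j => if h : j ∈ Dbl then Classical.choose (hθex j h) else (i₀, true) with hθdef
  have hθspec : ∀ j (h : j ∈ Dbl), ∃ (x y : Fin d → ℝ) (hx : x ∈ S') (hy : y ∈ S'),
      π ⟨x, hx⟩ = (j, true) ∧ π ⟨y, hy⟩ = (j, false) ∧ θ j ∉ I ∧ (θ j).1 ≠ i₀ ∧
      (Tie S x y (θ j) ∨ Spare S x y (θ j)) := by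
    intro j h
    have he : θ j = Classical.choose (hθex j h) := by
      simp only [hθdef]
      exact dif_pos h
    rw [he]
    exact Classical.choose_spec (hθex j h)
  have ineq2 : Dbl.card + I.card ≤ J.card * 2 := by
    have hsub : I ⊆ J ×ˢ (Finset.univ : Finset Bool) := by
      intro sl hsl
      rw [Finset.mem_product]
      exact ⟨Finset.mem_erase.mpr ⟨hIi₀ sl hsl, Finset.mem_univ _⟩, Finset.mem_univ _⟩
    have hmaps : ∀ j ∈ Dbl, θ j ∈ (J ×ˢ (Finset.univ : Finset Bool)) \ I := by
      intro j hj
      obtain ⟨x, y, hx, hy, hπx, hπy, hnI, hni₀, hTS⟩ := hθspec j hj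
      rw [Finset.mem_sdiff, Finset.mem_product]
      exact ⟨⟨Finset.mem_erase.mpr ⟨hni₀, Finset.mem_univ _⟩, Finset.mem_univ _⟩, hnI⟩
    have hinj : Set.InjOn θ Dbl := by
      intro j hj j' hj' heq
      by_contra hne
      obtain ⟨x, y, hx, hy, hπx, hπy, hnI, hni₀, hTS⟩ := hθspec j hj
      obtain ⟨x', y', hx', hy', hπx', hπy', hnI', hni₀', hTS'⟩ := hθspec j' hj'
      have hxS := (hmem' x hx).1
      have hyS := (hmem' y hy).1
      have hx'S := (hmem' x' hx').1
      have hy'S := (hmem' y' hy').1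
      have hxx' : x ≠ x' := by
        intro hxe
        apply hne
        have e : ((j, true) : Fin d × Bool) = (j', true) := by
          rw [← hπx, ← hπx']
          exact congrArg π (Subtype.ext hxe)
        exact congrArg Prod.fst e
      have hxy' : x ≠ y' := by
        intro hxe
        have e : ((j, true) : Fin d × Bool) = (j', false) := by
          rw [← hπx, ← hπy']
          exact congrArg π (Subtype.ext hxe)
        exact Bool.noConfusion (congrArg Prod.snd e)
      have hyx' : y ≠ x' := by
        intro hxe
        have e : ((j, false) : Fin d × Bool) = (j', true) := by
          rw [← hπy, ← hπx']
          exact congrArg π (Subtype.ext hxe)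
        exact Bool.noConfusion (congrArg Prod.snd e)
      have hyy' : y ≠ y' := by
        intro hxe
        apply hne
        have e : ((j, false) : Fin d × Bool) = (j', false) := by
          rw [← hπy, ← hπy']
          exact congrArg π (Subtype.ext hxe)
        exact congrArg Prod.fst e
      rw [← heq] at hTS'
      rcases hTS with ⟨hteq, htbe⟩ | hsp <;> rcases hTS' with ⟨hteq', htbe'⟩ | hsp'
      · -- Tie, Tie
        rcases hsl : θ j with ⟨u, s⟩
        rw [hsl] at htbe htbe'
        cases s
        · have ha := htbe x' hx'S (fun h => hxx' h.symm) (fun h => hyx' h.symm)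
          have hb := htbe' x hxS hxx' hxy'
          linarith
        · have ha := htbe x' hx'S (fun h => hxx' h.symm) (fun h => hyx' h.symm)
          have hb := htbe' x hxS hxx' hxy'
          linarith
      · -- Tie, Spare
        rcases hsl : θ j with ⟨u, s⟩
        rw [hsl] at htbe hsp'
        rcases hsp' with hq | hq <;> cases s
        · have ha := hq x hxS hxx'
          have hb := htbe x' hx'S (fun h => hxx' h.symm) (fun h => hyx' h.symm)
          linarith
        · have ha := hq x hxS hxx'
          have hb := htbe x' hx'S (fun h => hxx' h.symm) (fun h => hyx' h.symm)
          linarith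
        · have ha := hq x hxS hxy'
          have hb := htbe y' hy'S (fun h => hxy' h.symm) (fun h => hyy' h.symm)
          linarith
        · have ha := hq x hxS hxy'
          have hb := htbe y' hy'S (fun h => hxy' h.symm) (fun h => hyy' h.symm)
          linarith
      · -- Spare, Tie
        rcases hsl : θ j with ⟨u, s⟩
        rw [hsl] at htbe' hsp
        rcases hsp with hq | hq <;> cases s
        · have ha := hq x' hx'S (fun h => hxx' h.symm)
          have hb := htbe' x hxS hxx' hxy'
          linarith
        · have ha := hq x' hx'S (fun h => hxx' h.symm)
          have hb := htbe' x hxS hxx' hxy'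
          linarith
        · have ha := hq x' hx'S (fun h => hyx' h.symm)
          have hb := htbe' y hyS hyx' hyy'
          linarith
        · have ha := hq x' hx'S (fun h => hyx' h.symm)
          have hb := htbe' y hyS hyx' hyy'
          linarith
      · -- Spare, Spare
        rcases hsp with hq | hq <;> rcases hsp' with hq' | hq'
        · exact hxx' (own_unique hxS hx'S hq hq')
        · exact hxy' (own_unique hxS hy'S hq hq')
        · exact hyx' (own_unique hyS hx'S hq hq')
        · exact hyy' (own_unique hyS hy'S hq hq')
    have hcard := Finset.card_le_card_of_injOn θ hmaps hinj
    have hsubcard : I.card ≤ (J ×ˢ (Finset.univ : Finset Bool)).card :=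
      Finset.card_le_card hsub
    rw [Finset.card_sdiff_of_subset hsub] at hcard
    rw [Finset.card_product] at hcard hsubcard
    simp only [Finset.card_univ, Fintype.card_bool] at hcard hsubcard
    omega
  omega
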